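/- arXiv:1701.08504 — 2 statements merged into one kernel-verified Lean document; each statement's English description precedes it below -/
import Mathlib

section
/- Let f : ℕ → ℕ be a multiplicative function (f(1) = 1 and f(ab) = f(a)f(b) whenever gcd(a,b) = 1) satisfying f(p^{k-1}) ≤ f(p^k) for every prime p and integer k ≥ 1. Then every positive integer n is f-practical if and only if f(p^k) ≤ S_f(p^{k-1}) + 1 holds for every prime p and every integer k ≥ 1. -/
open Finset

def Sf (f : ℕ → ℕ) (n : ℕ) : ℕ := ∑ d ∈ n.divisors, f d

def FPractical (f : ℕ → ℕ) (n : ℕ) : Prop :=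
  0 < n ∧ ∀ m : ℕ, 0 < m → m ≤ Sf f n →
    ∃ D : Finset ℕ, D ⊆ n.divisors ∧ m = ∑ d ∈ D, f d

def WeaklyFPractical (f : ℕ → ℕ) (n : ℕ) : Prop :=
  0 < n ∧ ∃ l : List ℕ,
    l.Nodup ∧
    l.toFinset = n.primeFactors ∧
    l.Pairwise (fun p q => f p ≤ f q) ∧
    ∀ i : Fin l.length,
      f (l.get i) ≤ Sf f (((l.take i).map fun p => p ^ n.factorization p).prod) + 1

lemma Sf_pos (f : ℕ → ℕ) (hf1 : f 1 = 1) {n : ℕ} (hn : 0 < n) : 1 ≤ Sf f n := by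
  have h1 : (1 : ℕ) ∈ n.divisors := Nat.one_mem_divisors.mpr hn.ne'
  calc 1 = f 1 := hf1.symm
    _ ≤ Sf f n := Finset.single_le_sum (fun i _ => Nat.zero_le _) h1

lemma Sf_mul (f : ℕ → ℕ) (hf1 : f 1 = 1)
    (hmul : ∀ a b : ℕ, Nat.Coprime a b → f (a * b) = f a * f b)
    {a b : ℕ} (hab : Nat.Coprime a b) :
    Sf f (a * b) = Sf f a * Sf f b := by
  classical
  set F : ArithmeticFunction ℕ := ⟨fun n => if n = 0 then 0 else f n, rfl⟩ with hF
  have hFap : ∀ {d : ℕ}, d ≠ 0 → F d = f d := fun {d} hd => by simp [hF, hd]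
  have hFm : F.IsMultiplicative := by
    constructor
    · simp [hF, hf1]
    · intro m n h
      rcases eq_or_ne m 0 with rfl | hm
      · simp [hF]
      rcases eq_or_ne n 0 with rfl | hn
      · simp [hF]
      rw [hFap hm, hFap hn, hFap (Nat.mul_ne_zero hm hn), hmul _ _ h]
  have hZF : (ArithmeticFunction.zeta * F).IsMultiplicative :=
    ArithmeticFunction.isMultiplicative_zeta.mul hFm
  have key : ∀ n : ℕ, Sf f n = (ArithmeticFunction.zeta * F) n := by
    intro n
    rw [ArithmeticFunction.zeta_mul_apply]
    exact Finset.sum_congr rfl fun d hd =>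
      (hFap (Nat.pos_of_mem_divisors hd).ne').symm
  rw [key, key, key, hZF.map_mul_of_coprime hab]

lemma decomp (N : ℕ) (hN : 1 ≤ N) (g : ℕ → ℕ) (hg0 : g 0 = 1)
    (hgpos : ∀ i, 1 ≤ g i) :
    ∀ k : ℕ, (∀ j, 1 ≤ j → j ≤ k → g j ≤ (∑ i ∈ range j, g i) + 1) →
    ∀ m, m ≤ N * ∑ i ∈ range (k + 1), g i →
    ∃ c : ℕ → ℕ, (∀ i, c i ≤ N) ∧ m = ∑ i ∈ range (k + 1), c i * g i := by
  intro k
  induction k with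
  | zero =>
    intro _ m hm
    rw [range_one, sum_singleton, hg0, mul_one] at hm
    exact ⟨fun i => if i = 0 then m else 0, fun i => by dsimp only; split <;> omega, by simp [hg0]⟩
  | succ k ih =>
    intro hcond m hm
    have hgp := hgpos (k + 1)
    set c' := min N (m / g (k + 1)) with hc'
    have hrle : c' * g (k + 1) ≤ m := by
      calc c' * g (k + 1) ≤ m / g (k + 1) * g (k + 1) :=
            Nat.mul_le_mul_right _ (min_le_right _ _)
        _ ≤ m := Nat.div_mul_le_self _ _
    set r := m - c' * g (k + 1) with hr
    have hrbound : r ≤ N * ∑ i ∈ range (k + 1), g i := by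
      rw [sum_range_succ, Nat.mul_add] at hm
      rcases le_total N (m / g (k + 1)) with h | h
      · have hcN : c' = N := min_eq_left h
        have hNg : N * g (k + 1) ≤ m := by
          calc N * g (k + 1) ≤ m / g (k + 1) * g (k + 1) := Nat.mul_le_mul_right _ h
            _ ≤ m := Nat.div_mul_le_self _ _
        have he : c' * g (k + 1) = N * g (k + 1) := by rw [hcN]
        omega
      · have hcm : c' = m / g (k + 1) := min_eq_right h
        have hmod : m % g (k + 1) < g (k + 1) := Nat.mod_lt _ hgp
        have hdm := Nat.div_add_mod m (g (k + 1))
        have h1 : g (k + 1) ≤ (∑ i ∈ range (k + 1), g i) + 1 :=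
          hcond (k + 1) (by omega) le_rfl
        have he : c' * g (k + 1) = g (k + 1) * (m / g (k + 1)) := by
          rw [hcm, mul_comm]
        have h2 : r = m % g (k + 1) := by omega
        have h3 : r ≤ ∑ i ∈ range (k + 1), g i := by omega
        calc r ≤ ∑ i ∈ range (k + 1), g i := h3
          _ ≤ N * ∑ i ∈ range (k + 1), g i := Nat.le_mul_of_pos_left _ hN
    obtain ⟨c, hcle, hcsum⟩ := ih (fun j h1 h2 => hcond j h1 (by omega)) r hrbound
    classical
    refine ⟨Function.update c (k + 1) c', ?_, ?_⟩
    · intro i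
      rcases eq_or_ne i (k + 1) with rfl | hi
      · rw [Function.update_self]; exact min_le_left _ _
      · rw [Function.update_of_ne hi]; exact hcle i
    · rw [sum_range_succ]
      have hsum : ∑ i ∈ range (k + 1), Function.update c (k + 1) c' i * g i
          = ∑ i ∈ range (k + 1), c i * g i := by
        refine Finset.sum_congr rfl fun i hi => ?_
        rw [Function.update_of_ne (by simp at hi; omega)]
      rw [hsum, Function.update_self, ← hcsum]
      omega

lemma step (f : ℕ → ℕ) (hf1 : f 1 = 1)
    (hmul : ∀ a b : ℕ, Nat.Coprime a b → f (a * b) = f a * f b)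
    (hmono : ∀ p k : ℕ, p.Prime → 1 ≤ k → f (p ^ (k - 1)) ≤ f (p ^ k))
    (hcond : ∀ p k : ℕ, p.Prime → 1 ≤ k → f (p ^ k) ≤ Sf f (p ^ (k - 1)) + 1)
    {n p k : ℕ} (hp : p.Prime) (hpn : ¬ p ∣ n) (hn : FPractical f n) :
    FPractical f (p ^ k * n) := by
  classical
  obtain ⟨hn0, hrep⟩ := hn
  have hfp : ∀ i, 1 ≤ f (p ^ i) := by
    intro i
    induction i with
    | zero => simp [hf1]
    | succ i ihi =>
      have := hmono p (i + 1) hp (by omega)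
      simpa using le_trans ihi this
  have hcop : Nat.Coprime (p ^ k) n :=
    Nat.Coprime.pow_left k ((Nat.Prime.coprime_iff_not_dvd hp).mpr hpn)
  have hSfpow : ∀ j : ℕ, Sf f (p ^ j) = ∑ i ∈ range (j + 1), f (p ^ i) := fun j =>
    Nat.sum_divisors_prime_pow hp
  have hSf : Sf f (p ^ k * n) = (Sf f n) * ∑ i ∈ range (k + 1), f (p ^ i) := by
    rw [Sf_mul f hf1 hmul hcop, hSfpow, mul_comm]
  have hNpos : 1 ≤ Sf f n := Sf_pos f hf1 hn0
  refine ⟨mul_pos (pow_pos hp.pos k) hn0, fun m hm0 hmle => ?_⟩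
  rw [hSf] at hmle
  have hgcond : ∀ j, 1 ≤ j → j ≤ k →
      f (p ^ j) ≤ (∑ i ∈ range j, f (p ^ i)) + 1 := by
    intro j h1 _
    have := hcond p j hp h1
    rwa [hSfpow (j - 1), Nat.sub_add_cancel h1] at this
  obtain ⟨c, hcle, hcsum⟩ :=
    decomp (Sf f n) hNpos (fun i => f (p ^ i)) (by simp [hf1]) hfp k hgcond m hmle
  -- choose divisor sets for each coefficient
  have hDex : ∀ i : ℕ, ∃ D : Finset ℕ, D ⊆ n.divisors ∧ c i = ∑ d ∈ D, f d := by
    intro i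
    rcases Nat.eq_zero_or_pos (c i) with h0 | hpos
    · exact ⟨∅, by simp, by simp [h0]⟩
    · exact hrep (c i) hpos (hcle i)
  choose D hDsub hDsum using hDex
  refine ⟨(range (k + 1)).biUnion (fun i => (D i).image (fun d => p ^ i * d)), ?_, ?_⟩
  · intro x hx
    simp only [mem_biUnion, mem_image, mem_range] at hx
    obtain ⟨i, hi, d, hd, rfl⟩ := hx
    have hd' := hDsub i hd
    rw [Nat.mem_divisors] at hd' ⊢
    exact ⟨mul_dvd_mul (pow_dvd_pow p (by omega)) hd'.1,
      (mul_pos (pow_pos hp.pos k) hn0).ne'⟩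
  · have hdisj : ∀ i ∈ range (k + 1), ∀ j ∈ range (k + 1), i ≠ j →
        Disjoint ((D i).image (fun d => p ^ i * d)) ((D j).image (fun d => p ^ j * d)) := by
      have key : ∀ i j : ℕ, i < j → ∀ d d', d ∈ D i → d' ∈ D j →
          p ^ i * d ≠ p ^ j * d' := by
        intro i j hij d d' hd hd' heq
        have hdn : d ∣ n := (Nat.mem_divisors.mp (hDsub i hd)).1
        have : p ^ i * d = p ^ i * (p ^ (j - i) * d') := by
          rw [← mul_assoc, ← pow_add, Nat.add_sub_cancel' hij.le, heq]
        have hde : d = p ^ (j - i) * d' :=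
          Nat.eq_of_mul_eq_mul_left (pow_pos hp.pos i) this
        have hpd : p ∣ d := hde ▸ Dvd.dvd.mul_right (dvd_pow_self p (by omega)) d'
        exact hpn (hpd.trans hdn)
      intro i _ j _ hij
      rw [Finset.disjoint_left]
      rintro x hxi hxj
      simp only [mem_image] at hxi hxj
      obtain ⟨d, hd, rfl⟩ := hxi
      obtain ⟨d', hd', heq⟩ := hxj
      rcases lt_or_gt_of_ne hij with h | h
      · exact key i j h d d' hd hd' heq.symm
      · exact key j i h d' d hd' hd heq
    rw [Finset.sum_biUnion]
    · rw [hcsum]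
      refine Finset.sum_congr rfl fun i _ => ?_
      rw [Finset.sum_image]
      · have : ∑ d ∈ D i, f (p ^ i * d) = ∑ d ∈ D i, f (p ^ i) * f d := by
          refine Finset.sum_congr rfl fun d hd => ?_
          have hdn : d ∣ n := (Nat.mem_divisors.mp (hDsub i hd)).1
          exact hmul _ _ (Nat.Coprime.pow_left i
            ((Nat.Prime.coprime_iff_not_dvd hp).mpr (fun h => hpn (h.trans hdn))))
        rw [this, ← Finset.mul_sum, ← hDsum, mul_comm]
      · intro a _ b _ hab
        exact Nat.eq_of_mul_eq_mul_left (pow_pos hp.pos i) hab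
    · exact hdisj

/-- Every positive integer is f-practical iff f(p^k) ≤ S_f(p^(k-1)) + 1 for every
prime p and integer k ≥ 1. -/
theorem stmt5 (f : ℕ → ℕ) (hf1 : f 1 = 1)
    (hmul : ∀ a b : ℕ, Nat.Coprime a b → f (a * b) = f a * f b)
    (hmono : ∀ p k : ℕ, p.Prime → 1 ≤ k → f (p ^ (k - 1)) ≤ f (p ^ k)) :
    (∀ n : ℕ, 0 < n → FPractical f n) ↔
      ∀ p k : ℕ, p.Prime → 1 ≤ k → f (p ^ k) ≤ Sf f (p ^ (k - 1)) + 1 := by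
  constructor
  · intro h p k hp hk
    by_contra hlt
    push_neg at hlt
    set m := Sf f (p ^ (k - 1)) + 1 with hm
    have hSfpow : ∀ j : ℕ, Sf f (p ^ j) = ∑ i ∈ range (j + 1), f (p ^ i) := fun j =>
      Nat.sum_divisors_prime_pow hp
    have hSksplit : Sf f (p ^ k) = Sf f (p ^ (k - 1)) + f (p ^ k) := by
      have hk1 : k - 1 + 1 = k := by omega
      rw [hSfpow k, hSfpow (k - 1), hk1, Finset.sum_range_succ]
    obtain ⟨D, hDsub, hDsum⟩ := (h (p ^ k) (pow_pos hp.pos k)).2 m (by omega) (by omega)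
    by_cases hk' : p ^ k ∈ D
    · have : f (p ^ k) ≤ ∑ d ∈ D, f d :=
        Finset.single_le_sum (fun i _ => Nat.zero_le _) hk'
      omega
    · have hsub : D ⊆ (p ^ (k - 1)).divisors := by
        intro d hd
        have hd' := hDsub hd
        rw [Nat.mem_divisors_prime_pow hp] at hd' ⊢
        obtain ⟨j, hj, rfl⟩ := hd'
        refine ⟨j, ?_, rfl⟩
        rcases Nat.lt_or_ge j k with h' | h'
        · omega
        · exfalso; apply hk'
          have : j = k := by omega
          rwa [this] at hd
      have : ∑ d ∈ D, f d ≤ Sf f (p ^ (k - 1)) :=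
        Finset.sum_le_sum_of_subset hsub
      omega
  · intro hcond n hn
    induction n using Nat.recOnPrimePow with
    | zero => exact absurd hn (lt_irrefl 0)
    | one =>
      refine ⟨one_pos, fun m hm0 hmle => ?_⟩
      have : Sf f 1 = 1 := by simp [Sf, hf1]
      rw [this] at hmle
      have : m = 1 := by omega
      exact ⟨Nat.divisors 1, le_refl _, by simp [this, hf1]⟩
    | prime_pow_mul a p k hp hpa hk ih =>
      have ha : 0 < a := Nat.pos_of_ne_zero (fun h => hpa (h ▸ dvd_zero p))
      exact step f hf1 hmul hmono hcond hp hpa (ih ha)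
end

section
/- Let f : ℕ → ℕ be an additive function (f(1) = 0 and f(ab) = f(a) + f(b) whenever gcd(a,b) = 1) with f(p) ≥ 1 for every prime p and f(p^{k-1}) ≤ f(p^k) for every prime p and integer k ≥ 1. Let n = p_1^{e_1}···p_k^{e_k} be a positive integer with distinct primes p_i. Then n is f-practical if and only if for every 1 ≤ i ≤ k and every 1 ≤ e ≤ e_i, the inequality f(p_i^e) ≤ 1 + ∑_{d | n, f(d) < f(p_i^e)} f(d) holds. -/
open Finset

open scoped Classical

lemma fpow_one_le (f : ℕ → ℕ) (hfp : ∀ p : ℕ, p.Prime → 1 ≤ f p)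
    (hmono : ∀ p k : ℕ, p.Prime → 1 ≤ k → f (p ^ (k - 1)) ≤ f (p ^ k))
    (p : ℕ) (hp : p.Prime) : ∀ a : ℕ, 1 ≤ a → 1 ≤ f (p ^ a) := by
  intro a ha
  induction a with
  | zero => omega
  | succ b ih =>
    rcases Nat.eq_or_lt_of_le ha with h | h
    · rw [← h, pow_one]; exact hfp p hp
    · have hb : 1 ≤ b := by omega
      calc 1 ≤ f (p ^ b) := ih hb
        _ ≤ f (p ^ (b + 1)) := by
            have := hmono p (b + 1) hp (by omega)
            simpa using this

lemma f_pos (f : ℕ → ℕ)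
    (hadd : ∀ a b : ℕ, Nat.Coprime a b → f (a * b) = f a + f b)
    (hfp : ∀ p : ℕ, p.Prime → 1 ≤ f p)
    (hmono : ∀ p k : ℕ, p.Prime → 1 ≤ k → f (p ^ (k - 1)) ≤ f (p ^ k)) :
    ∀ m : ℕ, 2 ≤ m → 1 ≤ f m := by
  intro m hm
  set p := m.minFac with hpdef
  have hp : p.Prime := Nat.minFac_prime (by omega)
  have hm0 : m ≠ 0 := by omega
  have ha : 1 ≤ m.factorization p :=
    hp.factorization_pos_of_dvd hm0 (Nat.minFac_dvd m)
  have hco : Nat.Coprime (p ^ m.factorization p) (ordCompl[p] m) :=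
    Nat.Coprime.pow_left _ (Nat.coprime_ordCompl hp hm0)
  have hdm : p ^ m.factorization p * (ordCompl[p] m) = m :=
    Nat.ordProj_mul_ordCompl_eq_self m p
  have h2 := hadd _ _ hco
  rw [hdm] at h2
  have h3 := fpow_one_le f hfp hmono p hp _ ha
  omega

lemma complete_lemma (f : ℕ → ℕ) :
    ∀ s : Finset ℕ,
      (∀ d ∈ s, f d ≤ 1 + ∑ d' ∈ s.filter (fun d' => f d' < f d), f d') →
      ∀ m : ℕ, m ≤ ∑ d ∈ s, f d → ∃ D : Finset ℕ, D ⊆ s ∧ m = ∑ d ∈ D, f d := by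
  intro s
  induction s using Finset.strongInduction with
  | _ s ih =>
    intro hs m hm
    rcases s.eq_empty_or_nonempty with rfl | hne
    · simp only [Finset.sum_empty, Nat.le_zero] at hm
      exact ⟨∅, by simp, by simp [hm]⟩
    · obtain ⟨x, hx, hxmax⟩ := Finset.exists_max_image s f hne
      have hss : s.erase x ⊂ s := Finset.erase_ssubset hx
      have hs' : ∀ d ∈ s.erase x,
          f d ≤ 1 + ∑ d' ∈ (s.erase x).filter (fun d' => f d' < f d), f d' := by
        intro d hd
        have hdmem := Finset.mem_of_mem_erase hd
        have heq : (s.erase x).filter (fun d' => f d' < f d)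
            = s.filter (fun d' => f d' < f d) := by
          rw [Finset.filter_erase]
          apply Finset.erase_eq_of_notMem
          simp only [Finset.mem_filter, not_and]
          intro _
          exact not_lt.2 (hxmax d hdmem)
        rw [heq]; exact hs d hdmem
      have hsum : ∑ d ∈ s.erase x, f d + f x = ∑ d ∈ s, f d :=
        Finset.sum_erase_add s f hx
      by_cases hcase : m ≤ ∑ d ∈ s.erase x, f d
      · obtain ⟨D, hD, hDm⟩ := ih _ hss hs' m hcase
        exact ⟨D, hD.trans (Finset.erase_subset x s), hDm⟩
      · push_neg at hcase
        have hfilter_sub : s.filter (fun d' => f d' < f x) ⊆ s.erase x := by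
          intro d hd
          simp only [Finset.mem_filter] at hd
          exact Finset.mem_erase.2
            ⟨by rintro rfl; exact absurd hd.2 (lt_irrefl _), hd.1⟩
        have h1 : ∑ d' ∈ s.filter (fun d' => f d' < f x), f d'
            ≤ ∑ d ∈ s.erase x, f d :=
          Finset.sum_le_sum_of_subset hfilter_sub
        have hfx : f x ≤ m := by
          have := hs x hx
          omega
        obtain ⟨D, hD, hDm⟩ := ih _ hss hs' (m - f x) (by omega)
        have hxD : x ∉ D := fun h => (Finset.mem_erase.1 (hD h)).1 rfl
        refine ⟨insert x D, ?_, ?_⟩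
        · intro y hy
          rcases Finset.mem_insert.1 hy with rfl | hy'
          · exact hx
          · exact Finset.mem_of_mem_erase (hD hy')
        · rw [Finset.sum_insert hxD, ← hDm]
          omega

/-- Naive criterion for additive functions: n is f-practical iff
f(p^e) ≤ 1 + ∑_{d ∣ n, f(d) < f(p^e)} f(d) for every prime power p^e with p^e ∥-dividing n. -/
theorem stmt17 (f : ℕ → ℕ) (hf1 : f 1 = 0)
    (hadd : ∀ a b : ℕ, Nat.Coprime a b → f (a * b) = f a + f b)
    (hfp : ∀ p : ℕ, p.Prime → 1 ≤ f p)
    (hmono : ∀ p k : ℕ, p.Prime → 1 ≤ k → f (p ^ (k - 1)) ≤ f (p ^ k))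
    (n : ℕ) (hn : 0 < n) :
    FPractical f n ↔
      ∀ p ∈ n.primeFactors, ∀ e : ℕ, 1 ≤ e → e ≤ n.factorization p →
        f (p ^ e) ≤ 1 + ∑ d ∈ n.divisors.filter fun d => f d < f (p ^ e), f d := by
  constructor
  · rintro ⟨-, hrep⟩ p hp e he1 hele
    have hpp : p.Prime := Nat.prime_of_mem_primeFactors hp
    have hdvd : p ^ e ∣ n := (Nat.Prime.pow_dvd_iff_le_factorization hpp hn.ne').mpr hele
    have hmem : p ^ e ∈ n.divisors := Nat.mem_divisors.2 ⟨hdvd, hn.ne'⟩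
    have hc1 : 1 ≤ f (p ^ e) := fpow_one_le f hfp hmono p hpp e he1
    have hSf : f (p ^ e) ≤ Sf f n := Finset.single_le_sum (fun _ _ => Nat.zero_le _) hmem
    by_contra hlt
    push_neg at hlt
    set S := ∑ d ∈ n.divisors.filter (fun d => f d < f (p ^ e)), f d with hSdef
    obtain ⟨D, hD, hDm⟩ := hrep (S + 1) (by omega) (by omega)
    by_cases hall : ∀ d ∈ D, f d < f (p ^ e)
    · have hDsub : D ⊆ n.divisors.filter (fun d => f d < f (p ^ e)) := by
        intro d hd
        exact Finset.mem_filter.2 ⟨hD hd, hall d hd⟩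
      have : ∑ d ∈ D, f d ≤ S := Finset.sum_le_sum_of_subset hDsub
      omega
    · push_neg at hall
      obtain ⟨d₀, hd₀, hd₀f⟩ := hall
      have : f d₀ ≤ ∑ d ∈ D, f d := Finset.single_le_sum (fun _ _ => Nat.zero_le _) hd₀
      omega
  · intro hcond
    refine ⟨hn, fun m hm0 hmle => ?_⟩
    apply complete_lemma f n.divisors ?_ m hmle
    -- key claim: every divisor d of n satisfies f d ≤ 1 + ∑_{d'|n, f d' < f d} f d'
    intro d hd
    have hddvd : d ∣ n := (Nat.mem_divisors.1 hd).1
    have hdpos : 0 < d := Nat.pos_of_mem_divisors hd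
    by_cases hd1 : d = 1
    · simp [hd1, hf1]
    · have hd2 : 2 ≤ d := by omega
      set p := d.minFac with hpdef
      have hpp : p.Prime := Nat.minFac_prime hd1
      have hd0 : d ≠ 0 := by omega
      set a := d.factorization p with hadef
      have ha1 : 1 ≤ a :=
        hpp.factorization_pos_of_dvd hd0 (Nat.minFac_dvd d)
      set e := ordCompl[p] d with hedef
      have hde : p ^ a * e = d := Nat.ordProj_mul_ordCompl_eq_self d p
      have hco : Nat.Coprime (p ^ a) e :=
        Nat.Coprime.pow_left _ (Nat.coprime_ordCompl hpp hd0)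
      have hfd : f d = f (p ^ a) + f e := by
        rw [← hde]; exact hadd _ _ hco
      have hpn : p ∈ n.primeFactors :=
        Nat.mem_primeFactors.2 ⟨hpp, (d.minFac_dvd).trans hddvd, hn.ne'⟩
      have halen : a ≤ n.factorization p := by
        have := (Nat.factorization_le_iff_dvd hd0 hn.ne').2 hddvd
        exact (Finsupp.le_def.1 this) p
      have hq := hcond p hpn a ha1 halen
      have hc1 : 1 ≤ f (p ^ a) := fpow_one_le f hfp hmono p hpp a ha1
      by_cases he1 : e = 1
      · have : d = p ^ a := by rw [← hde, he1, mul_one]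
        rw [this]
        exact hq
      · -- e ≥ 2
        have hepos : 0 < e := Nat.ordCompl_pos p hd0
        have he2 : 2 ≤ e := by omega
        have hfe : 1 ≤ f e := f_pos f hadd hfp hmono e he2
        -- choose x ∈ {e, p^a} with larger f-value
        have key : ∀ x : ℕ, x ∈ n.divisors → f (p ^ a) ≤ f x → f x < f d →
            ∑ d' ∈ n.divisors.filter (fun d' => f d' < f (p ^ a)), f d' + f x
              ≤ ∑ d' ∈ n.divisors.filter (fun d' => f d' < f d), f d' := by
          intro x hxmem hx1 hx2
          have hxnot : x ∉ n.divisors.filter (fun d' => f d' < f (p ^ a)) := by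
            simp only [Finset.mem_filter, not_and]
            intro _
            exact not_lt.2 hx1
          have hsub : insert x (n.divisors.filter (fun d' => f d' < f (p ^ a)))
              ⊆ n.divisors.filter (fun d' => f d' < f d) := by
            intro y hy
            rcases Finset.mem_insert.1 hy with rfl | hy'
            · exact Finset.mem_filter.2 ⟨hxmem, hx2⟩
            · have := Finset.mem_filter.1 hy'
              exact Finset.mem_filter.2 ⟨this.1, lt_of_lt_of_le this.2 (by omega)⟩
          calc ∑ d' ∈ n.divisors.filter (fun d' => f d' < f (p ^ a)), f d' + f x
              = ∑ d' ∈ insert x (n.divisors.filter (fun d' => f d' < f (p ^ a))), f d' := by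
                rw [Finset.sum_insert hxnot]; omega
            _ ≤ ∑ d' ∈ n.divisors.filter (fun d' => f d' < f d), f d' :=
                Finset.sum_le_sum_of_subset hsub
        have hpamem : p ^ a ∈ n.divisors :=
          Nat.mem_divisors.2 ⟨(Dvd.intro e (mul_comm e (p ^ a) ▸ hde)).trans hddvd, hn.ne'⟩
        have hemem : e ∈ n.divisors :=
          Nat.mem_divisors.2 ⟨(Nat.ordCompl_dvd d p).trans hddvd, hn.ne'⟩
        rcases le_total (f e) (f (p ^ a)) with hle | hle
        · have := key (p ^ a) hpamem le_rfl (by omega)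
          omega
        · have := key e hemem hle (by omega)
          omega
end
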